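/- For integers d2 ≥ d1 ≥ 2, the cubic ρ₃(k) = (2d2³ + d2²)k³ + (8d1d2² - 2d1d2 - 5d2² + 2d2)k² + (10d1²d2 - 4d1² - 10d1d2 + 4d1)k + 4d1³ - 4d1² is strictly positive for every k ∈ (0,1). -/
import Mathlib


/-- ρ₃(k) > 0 for k ∈ (0,1). -/
theorem stmt_9 (d1 d2 : ℕ) (h1 : 2 ≤ d1) (h2 : d1 ≤ d2) (k : ℝ)
    (hk1 : 0 < k) (hk2 : k < 1) :
    0 < (2*(d2:ℝ)^3 + d2^2)*k^3
      + (8*(d1:ℝ)*d2^2 - 2*d1*d2 - 5*d2^2 + 2*d2)*k^2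
      + (10*(d1:ℝ)^2*d2 - 4*d1^2 - 10*d1*d2 + 4*d1)*k
      + 4*(d1:ℝ)^3 - 4*d1^2 := by
  have hd1 : (2:ℝ) ≤ d1 := by exact_mod_cast h1
  have hd2 : (d1:ℝ) ≤ d2 := by exact_mod_cast h2
  have hk3 : (0:ℝ) < k^3 := by positivity
  have hk2' : (0:ℝ) < k^2 := by positivity
  have hc3 : (0:ℝ) < 2*(d2:ℝ)^3 + d2^2 := by nlinarith
  have hc2 : (0:ℝ) ≤ 8*(d1:ℝ)*d2^2 - 2*d1*d2 - 5*d2^2 + 2*d2 := by nlinarith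
  have hc1 : (0:ℝ) ≤ 10*(d1:ℝ)^2*d2 - 4*d1^2 - 10*d1*d2 + 4*d1 := by nlinarith
  have hc0 : (0:ℝ) < 4*(d1:ℝ)^3 - 4*d1^2 := by nlinarith
  nlinarith [mul_pos hc3 hk3, mul_nonneg hc2 hk2'.le, mul_nonneg hc1 hk1.le]
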